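/- Let f be a form of degree d in n variables over k with symmetric tensor A, i.e., A : {1,…,n}^d → k is invariant under all permutations of its d arguments and f = Σ_{i_1,…,i_d} A(i_1,…,i_d) x_{i_1}⋯x_{i_d}. For indices i_3,…,i_d let A^{(i_3⋯i_d)} denote the n×n matrix whose (i_1,i_2) entry is A(i_1,i_2,i_3,…,i_d). Then for every X ∈ k^{n×n}, the matrix H·X is symmetric (where H is the Hessian matrix of f and X is viewed as a matrix of constant polynomials) if and only if Xᵀ·A^{(i_3⋯i_d)} = A^{(i_3⋯i_d)}·X for all 1 ≤ i_3,…,i_d ≤ n. -/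

import Mathlib

open MvPolynomial Matrix

/-- The Hessian matrix of a multivariate polynomial. -/
noncomputable def hessian {k : Type*} [Field k] {σ : Type*} (f : MvPolynomial σ k) :
    Matrix σ σ (MvPolynomial σ k) :=
  Matrix.of fun i j => pderiv i (pderiv j f)

/-- The center of a form `f`: scalar matrices `X` such that `H · X` is symmetric,
where `H` is the Hessian matrix of `f`. -/
def center {k : Type*} [Field k] {σ : Type*} [Fintype σ] (f : MvPolynomial σ k) :
    Set (Matrix σ σ k) :=
  {X | (hessian f * X.map (C : k → MvPolynomial σ k))ᵀ
        = hessian f * X.map (C : k → MvPolynomial σ k)}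

/-- Given a symmetric `d`-tensor `A` and fixed last `d - 2` indices `w`, the `n × n`
matrix `A^{(i₃⋯i_d)}` with `(i₁,i₂)` entry `A(i₁,i₂,w)`. -/
def sliceMatrix {k : Type*} [Field k] {n d : ℕ} (hd : 3 ≤ d)
    (A : (Fin d → Fin n) → k) (w : Fin (d - 2) → Fin n) : Matrix (Fin n) (Fin n) k :=
  Matrix.of fun i₁ i₂ => A fun t =>
    if (t : ℕ) = 0 then i₁
    else if (t : ℕ) = 1 then i₂
    else w ⟨(t : ℕ) - 2, by have ht := t.isLt; omega⟩

namespace HCaux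
set_option linter.unusedSectionVars false
set_option maxHeartbeats 1000000

lemma prod_X_eq_monomial {k : Type*} [CommSemiring k] {τ σc : Type*} [DecidableEq σc]
    (L : Finset τ) (g : τ → σc) :
    (∏ l ∈ L, (X (g l) : MvPolynomial σc k)) =
      monomial (∑ l ∈ L, Finsupp.single (g l) 1) 1 := by
  classical
  induction L using Finset.induction_on with
  | empty => simp
  | insert _ _ ha ih =>
      rw [Finset.prod_insert ha, Finset.sum_insert ha, ih, X, monomial_mul, one_mul]

lemma pderiv_prod_X {k : Type*} [CommRing k] {τ σc : Type*} [DecidableEq τ] [DecidableEq σc]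
    (L : Finset τ) (g : τ → σc) (j : σc) :
    pderiv j (∏ t ∈ L, (X (g t) : MvPolynomial σc k)) =
      ∑ t ∈ L, if g t = j then ∏ t' ∈ L.erase t, (X (g t') : MvPolynomial σc k) else 0 := by
  classical
  induction L using Finset.induction_on with
  | empty => simp
  | @insert a L ha ih =>
      rw [Finset.prod_insert ha, pderiv_mul, ih, Finset.sum_insert ha, Finset.erase_insert ha]
      congr 1
      · rw [pderiv_X]
        rw [Pi.single_apply]
        split_ifs with h
        · rw [one_mul]
        · rw [zero_mul]
      · rw [Finset.mul_sum]
        refine Finset.sum_congr rfl fun t ht => ?_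
        rw [mul_ite, mul_zero]
        split_ifs with h
        · rw [Finset.erase_insert_of_ne (fun hc => ha (by rw [hc]; exact ht)),
            Finset.prod_insert (fun hc => ha (Finset.mem_of_mem_erase hc))]
        · rfl

lemma exists_perm {m n : ℕ} {w w' : Fin m → Fin n}
    (h : (∑ l, Finsupp.single (w l) 1 : Fin n →₀ ℕ) = ∑ l, Finsupp.single (w' l) 1) :
    ∃ σ : Equiv.Perm (Fin m), w' ∘ σ = w := by
  classical
  have hcard : ∀ a : Fin n, Fintype.card {l // w l = a} = Fintype.card {l // w' l = a} := by
    intro a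
    have happ := congrArg (fun s : Fin n →₀ ℕ => s a) h
    simp only [Finsupp.finset_sum_apply, Finsupp.single_apply] at happ
    rw [Fintype.card_subtype, Fintype.card_subtype, Finset.card_filter, Finset.card_filter]
    simpa using happ
  have e : ∀ a : Fin n, {l // w l = a} ≃ {l // w' l = a} :=
    fun a => Fintype.equivOfCardEq (hcard a)
  exact ⟨Equiv.ofFiberEquiv e, funext fun l => Equiv.ofFiberEquiv_map e l⟩




lemma cast_ne_zero_of_small {k : Type*} [Field k] {d : ℕ} (hd : 3 ≤ d)
    (hchar : ringChar k = 0 ∨ d < ringChar k)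
    (N : ℕ) (hN : N ≠ 0) (hsm : ∀ q : ℕ, q.Prime → q ∣ N → q ≤ d) :
    (N : k) ≠ 0 := by
  rcases hchar with h0 | hlt
  · haveI : CharP k 0 := ringChar.eq_iff.mp h0
    haveI : CharZero k := CharP.charP_to_charZero k
    exact Nat.cast_ne_zero.mpr hN
  · haveI : CharP k (ringChar k) := ringChar.charP k
    have hp : (ringChar k).Prime := CharP.char_is_prime_of_two_le k _ (by omega)
    intro hzero
    have hdvd : ringChar k ∣ N := (CharP.cast_eq_zero_iff k (ringChar k) N).mp hzero
    have := hsm _ hp hdvd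
    omega



lemma ext_lemma {k : Type*} [Field k] {m n : ℕ} (hm : ((m.factorial : k)) ≠ 0)
    (c : (Fin m → Fin n) → k)
    (hc : ∀ (σ : Equiv.Perm (Fin m)) (w : Fin m → Fin n), c (w ∘ σ) = c w)
    (h : ∑ w : Fin m → Fin n, C (c w) * ∏ l, X (w l) = (0 : MvPolynomial (Fin n) k)) :
    ∀ w, c w = 0 := by
  classical
  intro w0
  set S : (Fin m → Fin n) → (Fin n →₀ ℕ) := fun w => ∑ l, Finsupp.single (w l) 1 with hS
  have hco : ∀ s, ∑ w ∈ Finset.univ.filter (fun w => S w = s), c w = 0 := by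
    intro s
    have h2 := congrArg (coeff s) h
    simp only [coeff_sum, coeff_zero, coeff_C_mul, prod_X_eq_monomial, coeff_monomial,
      mul_ite, mul_one, mul_zero] at h2
    rw [Finset.sum_filter]
    exact h2
  have hSinv : ∀ σ : Equiv.Perm (Fin m), S (w0 ∘ σ) = S w0 := fun σ =>
    Equiv.sum_comp σ (fun l => Finsupp.single (w0 l) 1)
  have h1 : ∑ σ : Equiv.Perm (Fin m), c (w0 ∘ σ)
      = (Fintype.card (Equiv.Perm (Fin m))) • c w0 := by
    rw [← Finset.card_univ, ← Finset.sum_const]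
    exact Finset.sum_congr rfl fun σ _ => hc σ w0
  have h2 : ∑ σ : Equiv.Perm (Fin m), c (w0 ∘ σ)
      = ∑ w : Fin m → Fin n, ∑ σ ∈ Finset.univ.filter (fun σ : Equiv.Perm (Fin m) => w0 ∘ ⇑σ = w), c (w0 ∘ ⇑σ) :=
    (Finset.sum_fiberwise Finset.univ (fun σ : Equiv.Perm (Fin m) => w0 ∘ ⇑σ) (fun σ => c (w0 ∘ ⇑σ))).symm
  set N0 := (Finset.univ.filter (fun σ : Equiv.Perm (Fin m) => w0 ∘ σ = w0)).card with hN0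
  have h4 : ∀ w, (Finset.univ.filter (fun σ : Equiv.Perm (Fin m) => w0 ∘ σ = w)).card
      = if S w = S w0 then N0 else 0 := by
    intro w
    split_ifs with hw
    · obtain ⟨σ0, hσ0⟩ := exists_perm (w := w) (w' := w0) hw
      refine Finset.card_bij' (fun σ _ => σ * σ0⁻¹) (fun σ _ => σ * σ0) ?_ ?_ ?_ ?_
      · intro σ hσ
        simp only [Finset.mem_filter, Finset.mem_univ, true_and] at hσ ⊢
        funext x
        have : w0 (σ (σ0⁻¹ x)) = w (σ0⁻¹ x) := congrFun hσ (σ0⁻¹ x)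
        simp only [Function.comp_apply, Equiv.Perm.mul_apply]
        rw [this, ← congrFun hσ0 (σ0⁻¹ x)]
        simp
      · intro σ hσ
        simp only [Finset.mem_filter, Finset.mem_univ, true_and] at hσ ⊢
        funext x
        have h5 : w0 (σ (σ0 x)) = w0 (σ0 x) := congrFun hσ (σ0 x)
        simp only [Function.comp_apply, Equiv.Perm.mul_apply]
        rw [h5]
        exact congrFun hσ0 x
      · intro σ _; simp [mul_assoc]
      · intro σ _; simp [mul_assoc]
    · rw [Finset.card_eq_zero, Finset.filter_eq_empty_iff]
      intro σ _ hcon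
      exact hw (by rw [← hcon]; exact hSinv σ)
  have h3 : ∀ w, ∑ σ ∈ Finset.univ.filter (fun σ : Equiv.Perm (Fin m) => w0 ∘ ⇑σ = w), c (w0 ∘ ⇑σ)
      = (if S w = S w0 then N0 else 0) • c w := by
    intro w
    rw [← h4 w, ← Finset.sum_const]
    exact Finset.sum_congr rfl fun σ hσ => by rw [(Finset.mem_filter.mp hσ).2]
  have key : (Fintype.card (Equiv.Perm (Fin m))) • c w0 = 0 := by
    rw [← h1, h2]
    calc ∑ w : Fin m → Fin n, ∑ σ ∈ Finset.univ.filter (fun σ : Equiv.Perm (Fin m) => w0 ∘ ⇑σ = w), c (w0 ∘ ⇑σ)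
        = ∑ w : Fin m → Fin n, (if S w = S w0 then N0 else 0) • c w :=
          Finset.sum_congr rfl fun w _ => h3 w
      _ = ∑ w ∈ Finset.univ.filter (fun w => S w = S w0), N0 • c w := by
          rw [Finset.sum_filter]
          refine Finset.sum_congr rfl fun w _ => ?_
          split_ifs with hw <;> simp
      _ = N0 • ∑ w ∈ Finset.univ.filter (fun w => S w = S w0), c w := by
          rw [Finset.smul_sum]
      _ = 0 := by rw [hco (S w0), smul_zero]
  rw [Fintype.card_perm, Fintype.card_fin, nsmul_eq_mul] at key
  exact (mul_eq_zero.mp key).resolve_left hm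





def vec {n d : ℕ} (hd : 3 ≤ d) (i j : Fin n) (w : Fin (d - 2) → Fin n) : Fin d → Fin n :=
  fun t =>
    if (t : ℕ) = 0 then i
    else if (t : ℕ) = 1 then j
    else w ⟨(t : ℕ) - 2, by have ht := t.isLt; omega⟩

lemma vec_apply_zero {n d : ℕ} (hd : 3 ≤ d) (i j : Fin n) (w : Fin (d - 2) → Fin n) :
    vec hd i j w ⟨0, by omega⟩ = i := rfl

lemma vec_apply_one {n d : ℕ} (hd : 3 ≤ d) (i j : Fin n) (w : Fin (d - 2) → Fin n) :
    vec hd i j w ⟨1, by omega⟩ = j := rfl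

lemma vec_apply_ge {n d : ℕ} (hd : 3 ≤ d) (i j : Fin n) (w : Fin (d - 2) → Fin n)
    (t : Fin d) (h0 : (t : ℕ) ≠ 0) (h1 : (t : ℕ) ≠ 1) :
    vec hd i j w t = w ⟨(t : ℕ) - 2, by have := t.isLt; omega⟩ := by
  simp only [vec, if_neg h0, if_neg h1]

def splitEquiv (n d : ℕ) (hd : 3 ≤ d) :
    (Fin d → Fin n) ≃ Fin n × Fin n × (Fin (d - 2) → Fin n) where
  toFun v := (v ⟨0, by omega⟩, v ⟨1, by omega⟩,
      fun l => v ⟨(l : ℕ) + 2, by have := l.isLt; omega⟩)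
  invFun x := vec hd x.1 x.2.1 x.2.2
  left_inv v := by
    funext t
    simp only [vec]
    split_ifs with h1 h2
    · congr 1; exact Fin.ext h1.symm
    · congr 1; exact Fin.ext h2.symm
    · congr 1; apply Fin.ext; simp only [Fin.val_mk]; omega
  right_inv x := by
    refine Prod.ext ?_ (Prod.ext ?_ ?_)
    · simp [vec]
    · simp [vec]
    · funext l
      simp only []
      rw [vec_apply_ge hd _ _ _ _ (by simp) (by simp)]
      congr 1

def shiftFun {d : ℕ} (σ : Equiv.Perm (Fin (d - 2))) : Fin d → Fin d := fun t =>
  if h : (t : ℕ) < 2 then t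
  else ⟨((σ ⟨(t : ℕ) - 2, by have := t.isLt; omega⟩ : Fin (d - 2)) : ℕ) + 2, by
    have := (σ ⟨(t : ℕ) - 2, by have := t.isLt; omega⟩).isLt; omega⟩

lemma shiftFun_inj {d : ℕ} (σ : Equiv.Perm (Fin (d - 2))) :
    Function.Injective (shiftFun σ) := by
  intro t1 t2 h
  unfold shiftFun at h
  by_cases h1 : (t1 : ℕ) < 2 <;> by_cases h2 : (t2 : ℕ) < 2
  · rwa [dif_pos h1, dif_pos h2] at h
  · rw [dif_pos h1, dif_neg h2] at h
    have := congrArg Fin.val h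
    simp at this; omega
  · rw [dif_neg h1, dif_pos h2] at h
    have := congrArg Fin.val h
    simp at this; omega
  · rw [dif_neg h1, dif_neg h2] at h
    have hv := congrArg Fin.val h
    simp only [Fin.val_mk, Nat.add_right_cancel_iff] at hv
    have h3 : (σ ⟨(t1 : ℕ) - 2, by have := t1.isLt; omega⟩)
        = σ ⟨(t2 : ℕ) - 2, by have := t2.isLt; omega⟩ := Fin.ext hv
    have h4 := σ.injective h3
    have h5 := congrArg Fin.val h4
    simp only [Fin.val_mk] at h5
    exact Fin.ext (by omega)

noncomputable def shiftPerm {d : ℕ} (σ : Equiv.Perm (Fin (d - 2))) : Equiv.Perm (Fin d) :=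
  Equiv.ofBijective _ ((Finite.injective_iff_bijective).mp (shiftFun_inj σ))

lemma vec_comp_shiftPerm {n d : ℕ} (hd : 3 ≤ d) (i j : Fin n)
    (w : Fin (d - 2) → Fin n) (σ : Equiv.Perm (Fin (d - 2))) :
    vec hd i j w ∘ (shiftPerm σ) = vec hd i j (w ∘ σ) := by
  funext t
  have happ : shiftPerm σ t = shiftFun σ t := rfl
  simp only [Function.comp_apply, happ]
  unfold shiftFun
  by_cases h : (t : ℕ) < 2
  · rw [dif_pos h]
    have h01 : (t : ℕ) = 0 ∨ (t : ℕ) = 1 := by omega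
    simp only [vec]
    rcases h01 with h0 | h1
    · rw [if_pos h0, if_pos h0]
    · rw [if_neg (by omega), if_pos h1, if_neg (by omega), if_pos h1]
  · rw [dif_neg h]
    rw [vec_apply_ge hd _ _ _ _ (by simp) (by simp), vec_apply_ge hd _ _ _ _ (by omega) (by omega)]
    simp only [Function.comp_apply, Fin.val_mk]
    congr 1



section Geo
variable {k : Type*} [Field k] {n d : ℕ}

lemma A_vec_perm (hd : 3 ≤ d) (A : (Fin d → Fin n) → k)
    (hsym : ∀ (p : Equiv.Perm (Fin d)) (v : Fin d → Fin n), A (v ∘ p) = A v)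
    (i j : Fin n) (w : Fin (d - 2) → Fin n) (σ : Equiv.Perm (Fin (d - 2))) :
    A (vec hd i j (w ∘ σ)) = A (vec hd i j w) := by
  rw [← vec_comp_shiftPerm hd i j w σ]
  exact hsym _ _

lemma vec_swap (hd : 3 ≤ d) (i j : Fin n) (w : Fin (d - 2) → Fin n) :
    vec hd i j w ∘ (Equiv.swap (⟨0, by omega⟩ : Fin d) ⟨1, by omega⟩) = vec hd j i w := by
  funext t
  set z0 : Fin d := ⟨0, by omega⟩
  set z1 : Fin d := ⟨1, by omega⟩
  by_cases h0 : t = z0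
  · subst h0
    simp only [Function.comp_apply, Equiv.swap_apply_left]
    rfl
  · by_cases h1 : t = z1
    · subst h1
      simp only [Function.comp_apply, Equiv.swap_apply_right]
      rfl
    · simp only [Function.comp_apply, Equiv.swap_apply_of_ne_of_ne h0 h1]
      have ht0 : (t : ℕ) ≠ 0 := fun hc => h0 (Fin.ext hc)
      have ht1 : (t : ℕ) ≠ 1 := fun hc => h1 (Fin.ext hc)
      rw [vec_apply_ge hd i j w t ht0 ht1, vec_apply_ge hd j i w t ht0 ht1]

lemma A_vec_swap (hd : 3 ≤ d) (A : (Fin d → Fin n) → k)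
    (hsym : ∀ (p : Equiv.Perm (Fin d)) (v : Fin d → Fin n), A (v ∘ p) = A v)
    (i j : Fin n) (w : Fin (d - 2) → Fin n) :
    A (vec hd i j w) = A (vec hd j i w) := by
  rw [← hsym (Equiv.swap (⟨0, by omega⟩ : Fin d) ⟨1, by omega⟩) (vec hd i j w),
    vec_swap hd i j w]

lemma prod_X_erase (hd : 3 ≤ d) (a b : Fin n) (w : Fin (d - 2) → Fin n) :
    ∏ u ∈ (Finset.univ.erase ⟨1, by omega⟩).erase (⟨0, by omega⟩ : Fin d),
        (X (vec hd a b w u) : MvPolynomial (Fin n) k)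
      = ∏ l : Fin (d - 2), (X (w l) : MvPolynomial (Fin n) k) := by
  refine Finset.prod_nbij' (fun u => (⟨(u : ℕ) - 2, by have := u.isLt; omega⟩ : Fin (d - 2)))
    (fun l => (⟨(l : ℕ) + 2, by have := l.isLt; omega⟩ : Fin d)) ?_ ?_ ?_ ?_ ?_
  · intro u hu; exact Finset.mem_univ _
  · intro l hl
    simp only [Finset.mem_erase, Finset.mem_univ, and_true, ne_eq, Fin.ext_iff]
    omega
  · intro u hu
    simp only [Finset.mem_erase, Finset.mem_univ, and_true, ne_eq, Fin.ext_iff] at hu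
    apply Fin.ext
    show (u : ℕ) - 2 + 2 = (u : ℕ)
    omega
  · intro l hl
    apply Fin.ext
    show (l : ℕ) + 2 - 2 = (l : ℕ)
    omega
  · intro u hu
    simp only [Finset.mem_erase, Finset.mem_univ, and_true, ne_eq, Fin.ext_iff] at hu
    rw [vec_apply_ge hd a b w u (by omega) (by omega)]

lemma sum_split (hd : 3 ≤ d) (A : (Fin d → Fin n) → k) (i j : Fin n) :
    ∑ v : Fin d → Fin n,
      (if v ⟨0, by omega⟩ = i ∧ v ⟨1, by omega⟩ = j then
        C (A v) * ∏ u ∈ (Finset.univ.erase ⟨1, by omega⟩).erase (⟨0, by omega⟩ : Fin d),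
          (X (v u) : MvPolynomial (Fin n) k)
      else 0)
    = ∑ w : Fin (d - 2) → Fin n, C (A (vec hd i j w)) * ∏ l, (X (w l) : MvPolynomial (Fin n) k) := by
  classical
  rw [← Equiv.sum_comp (splitEquiv n d hd).symm]
  have happ : ∀ x : Fin n × Fin n × (Fin (d - 2) → Fin n),
      (splitEquiv n d hd).symm x = vec hd x.1 x.2.1 x.2.2 := fun _ => rfl
  simp only [happ]
  rw [Fintype.sum_prod_type]
  have hinner : ∀ a : Fin n,
      (∑ x : Fin n × (Fin (d - 2) → Fin n),
        (if vec hd a x.1 x.2 ⟨0, by omega⟩ = i ∧ vec hd a x.1 x.2 ⟨1, by omega⟩ = j then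
          C (A (vec hd a x.1 x.2)) * ∏ u ∈ (Finset.univ.erase ⟨1, by omega⟩).erase (⟨0, by omega⟩ : Fin d),
            (X (vec hd a x.1 x.2 u) : MvPolynomial (Fin n) k)
        else 0))
      = ∑ x : Fin n × (Fin (d - 2) → Fin n),
        (if a = i ∧ x.1 = j then
          C (A (vec hd a x.1 x.2)) * ∏ l, (X (x.2 l) : MvPolynomial (Fin n) k) else 0) := by
    intro a
    refine Finset.sum_congr rfl fun x _ => ?_
    rw [vec_apply_zero, vec_apply_one, prod_X_erase hd a x.1 x.2]
  simp only [hinner]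
  rw [Finset.sum_eq_single i]
  · simp only [true_and]
    rw [Fintype.sum_prod_type]
    rw [Finset.sum_eq_single j]
    · simp
    · intro b _ hb
      refine Finset.sum_eq_zero fun x _ => ?_
      simp [hb]
    · intro h; exact absurd (Finset.mem_univ _) h
  · intro a _ ha
    refine Finset.sum_eq_zero fun x _ => ?_
    rw [if_neg (fun hc => ha hc.1)]
  · intro h; exact absurd (Finset.mem_univ _) h

end Geo

section Geo2
set_option maxHeartbeats 1000000
variable {k : Type*} [Field k] {n d : ℕ}

lemma pair_sum (hd : 3 ≤ d) (A : (Fin d → Fin n) → k)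
    (hsym : ∀ (p : Equiv.Perm (Fin d)) (v : Fin d → Fin n), A (v ∘ p) = A v)
    (i j : Fin n) (t t' : Fin d) (hne : t' ≠ t) :
    ∑ v : Fin d → Fin n,
      (if v t' = i ∧ v t = j then
        C (A v) * ∏ u ∈ (Finset.univ.erase t).erase t', (X (v u) : MvPolynomial (Fin n) k)
      else 0)
    = ∑ w : Fin (d - 2) → Fin n, C (A (vec hd i j w)) * ∏ l, (X (w l) : MvPolynomial (Fin n) k) := by
  classical
  set z0 : Fin d := ⟨0, by omega⟩ with hz0def
  set z1 : Fin d := ⟨1, by omega⟩ with hz1def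
  have hz01 : z0 ≠ z1 := by simp [hz0def, hz1def, Fin.ext_iff]
  set p1 := Equiv.swap z0 t' with hp1
  set p := (Equiv.swap z1 (p1.symm t)).trans p1 with hp
  have hpz0 : p z0 = t' := by
    rw [hp]
    simp only [Equiv.trans_apply]
    have hne1 : z0 ≠ p1.symm t := by
      intro hc
      apply hne
      rw [← p1.apply_symm_apply t, ← hc, hp1, Equiv.swap_apply_left]
    rw [Equiv.swap_apply_of_ne_of_ne hz01 hne1, hp1, Equiv.swap_apply_left]
  have hpz1 : p z1 = t := by
    rw [hp]
    simp only [Equiv.trans_apply, Equiv.swap_apply_left]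
    exact p1.apply_symm_apply t
  set e : (Fin d → Fin n) ≃ (Fin d → Fin n) := Equiv.arrowCongr p (Equiv.refl (Fin n)) with he
  have hev : ∀ (v : Fin d → Fin n) (u : Fin d), e v u = v (p.symm u) := fun v u => rfl
  have hevc : ∀ v : Fin d → Fin n, e v = v ∘ ⇑p.symm := fun v => rfl
  rw [← Equiv.sum_comp e (fun v =>
    (if v t' = i ∧ v t = j then
      C (A v) * ∏ u ∈ (Finset.univ.erase t).erase t', (X (v u) : MvPolynomial (Fin n) k)
    else 0))]
  rw [← sum_split hd A i j]
  refine Finset.sum_congr rfl fun v _ => ?_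
  have hs0 : p.symm t' = z0 := by rw [Equiv.symm_apply_eq, hpz0]
  have hs1 : p.symm t = z1 := by rw [Equiv.symm_apply_eq, hpz1]
  have hA : A (e v) = A v := by rw [hevc]; exact hsym p.symm v
  have hcond1 : e v t' = v z0 := by rw [hev, hs0]
  have hcond2 : e v t = v z1 := by rw [hev, hs1]
  rw [hcond1, hcond2, hA]
  congr 1
  congr 1
  refine Finset.prod_equiv p.symm ?_ ?_
  · intro u
    simp only [Finset.mem_erase, Finset.mem_univ, and_true]
    constructor
    · rintro ⟨hu1, hu2⟩
      have hc0 : p.symm u ≠ z0 := fun hc => hu1 (by rw [← hpz0, ← hc, Equiv.apply_symm_apply])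
      have hc1 : p.symm u ≠ z1 := fun hc => hu2 (by rw [← hpz1, ← hc, Equiv.apply_symm_apply])
      exact ⟨hc0, hc1⟩
    · rintro ⟨hu1, hu2⟩
      have hc0 : u ≠ t' := fun hc => hu1 (by rw [hc]; exact hs0)
      have hc1 : u ≠ t := fun hc => hu2 (by rw [hc]; exact hs1)
      exact ⟨hc0, hc1⟩
  · intro u _
    rw [hev]

lemma hessian_entry (hd : 3 ≤ d) (A : (Fin d → Fin n) → k)
    (hsym : ∀ (p : Equiv.Perm (Fin d)) (v : Fin d → Fin n), A (v ∘ p) = A v)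
    (i j : Fin n) :
    pderiv i (pderiv j (∑ v : Fin d → Fin n, C (A v) * ∏ t, (X (v t) : MvPolynomial (Fin n) k)))
      = (d * (d - 1)) •
          ∑ w : Fin (d - 2) → Fin n, C (A (vec hd i j w)) * ∏ l, (X (w l) : MvPolynomial (Fin n) k) := by
  classical
  have hite : ∀ (P Q : Prop) [Decidable P] [Decidable Q] (x : MvPolynomial (Fin n) k),
      (if Q then (if P then x else 0) else 0) = if P ∧ Q then x else 0 := by
    intro P Q _ _ x
    split_ifs with h1 h2 h3 h4 <;> first | rfl | tauto
  rw [map_sum]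
  have step1 : ∀ v : Fin d → Fin n,
      pderiv j (C (A v) * ∏ t, (X (v t) : MvPolynomial (Fin n) k))
        = C (A v) * ∑ t, (if v t = j then ∏ t' ∈ Finset.univ.erase t, (X (v t') : MvPolynomial (Fin n) k) else 0) := by
    intro v
    rw [pderiv_mul, pderiv_C, zero_mul, zero_add, pderiv_prod_X]
  simp only [step1]
  rw [map_sum]
  have step2 : ∀ v : Fin d → Fin n,
      pderiv i (C (A v) * ∑ t, (if v t = j then ∏ t' ∈ Finset.univ.erase t, (X (v t') : MvPolynomial (Fin n) k) else 0))
        = ∑ t : Fin d, ∑ t' ∈ Finset.univ.erase t,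
            (if v t' = i ∧ v t = j then
              C (A v) * ∏ u ∈ (Finset.univ.erase t).erase t', (X (v u) : MvPolynomial (Fin n) k)
            else 0) := by
    intro v
    rw [pderiv_mul, pderiv_C, zero_mul, zero_add, map_sum]
    rw [Finset.mul_sum]
    refine Finset.sum_congr rfl fun t _ => ?_
    rw [apply_ite (pderiv i), map_zero, pderiv_prod_X]
    rw [mul_ite, mul_zero, Finset.mul_sum]
    by_cases hQ : v t = j
    · rw [if_pos hQ]
      refine Finset.sum_congr rfl fun t' _ => ?_
      by_cases hP : v t' = i
      · rw [if_pos hP, if_pos ⟨hP, hQ⟩]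
      · rw [if_neg hP, if_neg (fun hc => hP hc.1), mul_zero]
    · rw [if_neg hQ]
      symm
      refine Finset.sum_eq_zero fun t' _ => ?_
      rw [if_neg (fun hc => hQ hc.2)]
  simp only [step2]
  rw [Finset.sum_comm]
  have step3 : ∀ t : Fin d,
      (∑ v : Fin d → Fin n, ∑ t' ∈ Finset.univ.erase t,
        (if v t' = i ∧ v t = j then
          C (A v) * ∏ u ∈ (Finset.univ.erase t).erase t', (X (v u) : MvPolynomial (Fin n) k)
        else 0))
      = (d - 1) • ∑ w : Fin (d - 2) → Fin n, C (A (vec hd i j w)) * ∏ l, (X (w l) : MvPolynomial (Fin n) k) := by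
    intro t
    rw [Finset.sum_comm]
    have step4 : ∀ t' ∈ Finset.univ.erase t,
        (∑ v : Fin d → Fin n,
          (if v t' = i ∧ v t = j then
            C (A v) * ∏ u ∈ (Finset.univ.erase t).erase t', (X (v u) : MvPolynomial (Fin n) k)
          else 0))
        = ∑ w : Fin (d - 2) → Fin n, C (A (vec hd i j w)) * ∏ l, (X (w l) : MvPolynomial (Fin n) k) := by
      intro t' ht'
      exact pair_sum hd A hsym i j t t' (Finset.mem_erase.mp ht').1
    rw [Finset.sum_congr rfl step4, Finset.sum_const, Finset.card_erase_of_mem (Finset.mem_univ t),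
      Finset.card_univ, Fintype.card_fin]
  rw [Finset.sum_congr rfl (fun t _ => step3 t), Finset.sum_const, Finset.card_univ,
    Fintype.card_fin, smul_smul]

end Geo2



end HCaux

set_option maxHeartbeats 1000000

/-- for a form `f` with symmetric tensor `A`, a scalar matrix `M` makes
`H·M` symmetric (`H` the Hessian of `f`) iff `Mᵀ·A^{(i₃⋯i_d)} = A^{(i₃⋯i_d)}·M` for all
choices of the indices `i₃,…,i_d`. -/
theorem hessian_center_iff_tensor_slices {k : Type*} [Field k] {n d : ℕ} (hd : 3 ≤ d)
    (hchar : ringChar k = 0 ∨ d < ringChar k)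
    (A : (Fin d → Fin n) → k)
    (hsym : ∀ (p : Equiv.Perm (Fin d)) (v : Fin d → Fin n), A (v ∘ p) = A v)
    (f : MvPolynomial (Fin n) k)
    (hf : f = ∑ v : Fin d → Fin n, C (A v) * ∏ t : Fin d, X (v t))
    (M : Matrix (Fin n) (Fin n) k) :
    M ∈ center f ↔
      ∀ w : Fin (d - 2) → Fin n,
        Mᵀ * sliceMatrix hd A w = sliceMatrix hd A w * M := by
  classical
  have hN1 : ((d * (d - 1) : ℕ) : k) ≠ 0 := by
    apply HCaux.cast_ne_zero_of_small hd hchar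
    · exact Nat.mul_ne_zero (by omega) (by omega)
    · intro q hq hdvd
      rcases (Nat.Prime.dvd_mul hq).mp hdvd with h | h
      · exact Nat.le_of_dvd (by omega) h
      · have := Nat.le_of_dvd (by omega) h; omega
  have hN2 : (((d - 2).factorial : ℕ) : k) ≠ 0 := by
    apply HCaux.cast_ne_zero_of_small hd hchar
    · exact Nat.factorial_ne_zero _
    · intro q hq hdvd
      have := (Nat.Prime.dvd_factorial hq).mp hdvd
      omega
  have hslice : ∀ (w : Fin (d - 2) → Fin n) (i j : Fin n),
      sliceMatrix hd A w i j = A (HCaux.vec hd i j w) := fun _ _ _ => rfl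
  have hsliceperm : ∀ (σ : Equiv.Perm (Fin (d - 2))) (w : Fin (d - 2) → Fin n),
      sliceMatrix hd A (w ∘ σ) = sliceMatrix hd A w := by
    intro σ w
    ext i j
    rw [hslice, hslice]
    exact HCaux.A_vec_perm hd A hsym i j w σ
  have hslicesymm : ∀ (w : Fin (d - 2) → Fin n) (i j : Fin n),
      sliceMatrix hd A w i j = sliceMatrix hd A w j i := by
    intro w i j
    rw [hslice, hslice]
    exact HCaux.A_vec_swap hd A hsym i j w
  have hHM : ∀ i j : Fin n, (hessian f * M.map (C : k → MvPolynomial (Fin n) k)) i j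
      = (d * (d - 1)) • ∑ w : Fin (d - 2) → Fin n,
          C ((sliceMatrix hd A w * M) i j) * ∏ l, X (w l) := by
    intro i j
    rw [Matrix.mul_apply]
    have hH : ∀ l : Fin n, hessian f i l
        = (d * (d - 1)) • ∑ w : Fin (d - 2) → Fin n,
            C (A (HCaux.vec hd i l w)) * ∏ l', X (w l') := by
      intro l
      show pderiv i (pderiv l f) = _
      rw [hf]
      exact HCaux.hessian_entry hd A hsym i l
    calc ∑ l, hessian f i l * (M.map C) l j
        = ∑ l, (d * (d - 1)) •
            ((∑ w : Fin (d - 2) → Fin n, C (A (HCaux.vec hd i l w)) * ∏ l', X (w l'))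
              * C (M l j)) := by
          refine Finset.sum_congr rfl fun l _ => ?_
          rw [hH l, Matrix.map_apply, smul_mul_assoc]
      _ = (d * (d - 1)) • ∑ l,
            ((∑ w : Fin (d - 2) → Fin n, C (A (HCaux.vec hd i l w)) * ∏ l', X (w l'))
              * C (M l j)) := by rw [Finset.smul_sum]
      _ = (d * (d - 1)) • ∑ w : Fin (d - 2) → Fin n,
            C ((sliceMatrix hd A w * M) i j) * ∏ l', X (w l') := by
          congr 1
          calc ∑ l, ((∑ w : Fin (d - 2) → Fin n, C (A (HCaux.vec hd i l w)) * ∏ l', X (w l'))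
                * C (M l j))
              = ∑ l, ∑ w : Fin (d - 2) → Fin n,
                  (C (A (HCaux.vec hd i l w)) * ∏ l', X (w l')) * C (M l j) := by
                refine Finset.sum_congr rfl fun l _ => ?_
                rw [Finset.sum_mul]
            _ = ∑ w : Fin (d - 2) → Fin n, ∑ l,
                  (C (A (HCaux.vec hd i l w)) * ∏ l', X (w l')) * C (M l j) :=
                Finset.sum_comm
            _ = ∑ w : Fin (d - 2) → Fin n,
                  C ((sliceMatrix hd A w * M) i j) * ∏ l', X (w l') := by
                refine Finset.sum_congr rfl fun w _ => ?_
                rw [Matrix.mul_apply, map_sum, Finset.sum_mul]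
                refine Finset.sum_congr rfl fun l _ => ?_
                rw [hslice, C_mul]
                ring
  have hmain : ∀ i j : Fin n,
      ((hessian f * M.map (C : k → MvPolynomial (Fin n) k)) j i
          = (hessian f * M.map (C : k → MvPolynomial (Fin n) k)) i j)
        ↔ ∀ w : Fin (d - 2) → Fin n,
            (sliceMatrix hd A w * M) j i = (sliceMatrix hd A w * M) i j := by
    intro i j
    rw [hHM j i, hHM i j]
    constructor
    · intro h w
      have h3 := h
      rw [← Nat.cast_smul_eq_nsmul k, ← Nat.cast_smul_eq_nsmul k, smul_eq_C_mul,
        smul_eq_C_mul] at h3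
      have h2 := mul_left_cancel₀ (by rwa [Ne, MvPolynomial.C_eq_zero]) h3
      have h4 : (∑ w' : Fin (d - 2) → Fin n,
          C (((sliceMatrix hd A w' * M) j i) - ((sliceMatrix hd A w' * M) i j))
            * ∏ l, X (w' l)) = (0 : MvPolynomial (Fin n) k) := by
        simp only [map_sub, sub_mul, Finset.sum_sub_distrib]
        rw [h2, sub_self]
      have h5 := HCaux.ext_lemma hN2
        (fun w' => ((sliceMatrix hd A w' * M) j i) - ((sliceMatrix hd A w' * M) i j))
        (fun σ w' => by simp only [hsliceperm σ w']) h4 w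
      exact sub_eq_zero.mp h5
    · intro h
      congr 1
      exact Finset.sum_congr rfl fun w _ => by rw [h w]
  constructor
  · intro hmem w
    have hentry : ∀ i j : Fin n,
        (hessian f * M.map (C : k → MvPolynomial (Fin n) k)) j i
          = (hessian f * M.map (C : k → MvPolynomial (Fin n) k)) i j := by
      intro i j
      have h := congrFun (congrFun hmem i) j
      rwa [Matrix.transpose_apply] at h
    ext i j
    have hji : (sliceMatrix hd A w * M) j i = (sliceMatrix hd A w * M) i j :=
      (hmain i j).mp (hentry i j) w
    have hL : ∑ l, Mᵀ i l * sliceMatrix hd A w l j = (sliceMatrix hd A w * M) j i := by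
      rw [Matrix.mul_apply]
      refine Finset.sum_congr rfl fun l _ => ?_
      rw [Matrix.transpose_apply, hslicesymm w l j]
      ring
    rw [Matrix.mul_apply, hL, hji]
  · intro hcomm
    refine Matrix.ext fun i j => ?_
    rw [Matrix.transpose_apply]
    refine (hmain i j).mpr (fun w => ?_)
    have h1 := congrFun (congrFun (hcomm w) i) j
    have h2 : (sliceMatrix hd A w * M) j i = (Mᵀ * sliceMatrix hd A w) i j := by
      rw [Matrix.mul_apply, Matrix.mul_apply]
      refine Finset.sum_congr rfl fun l _ => ?_
      rw [Matrix.transpose_apply, hslicesymm w j l]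
      ring
    rw [h2, h1]
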